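/- For all nonnegative integers p and q, the sum of the weights ω(L) over all Delannoy paths L to (p,q) equals c_{p,q}; that is, Σ_{L ∈ D(p,q)} ω(L) = Σ_{k=0}^{min(p,q)} (p+q)!/((q−k)!·(p−k)!·k!). -/

import Mathlib

/-- The three kinds of steps of a Delannoy path: `E = (1,0)`, `N = (0,1)`, `D = (1,1)`. -/
inductive DStep : Type
  | E : DStep
  | N : DStep
  | D : DStep
  deriving DecidableEq

/-- The lattice vector of a step. -/
def DStep.vec : DStep → ℕ × ℕ
  | DStep.E => (1, 0)
  | DStep.N => (0, 1)
  | DStep.D => (1, 1)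

/-- The weight of a Delannoy path starting at the lattice point `st`: each `E` or `N` step
has weight `1`, and a `D` step starting at `(a,b)` has weight `2(a+b+1)`; the weight of the
path is the product of the weights of its steps. -/
def pathWeight : ℕ × ℕ → List DStep → ℕ
  | _, [] => 1
  | st, s :: rest =>
      (match s with
        | DStep.E => 1
        | DStep.N => 1
        | DStep.D => 2 * (st.1 + st.2 + 1)) * pathWeight (st + s.vec) rest

/-- The sum of the weights of all Delannoy paths from `(0,0)` to `(p,q)` equals
`c_{p,q} = Σ_{k=0}^{min(p,q)} (p+q)!/((q-k)!·(p-k)!·k!)`, the number of ssymmetric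
`(2p,2q)` clans. -/


def gg (k a b : ℕ) : ℕ := (a + b + 2*k).factorial / (b.factorial * a.factorial * k.factorial)

lemma gg_dvd (k a b : ℕ) : b.factorial * a.factorial * k.factorial ∣ (a + b + 2*k).factorial := by
  have h1 : b.factorial * a.factorial ∣ (b + a).factorial :=
    Nat.factorial_mul_factorial_dvd_factorial_add b a
  have h2 : (b + a).factorial * k.factorial ∣ (b + a + k).factorial :=
    Nat.factorial_mul_factorial_dvd_factorial_add (b+a) k
  have h3 : (b + a + k).factorial ∣ (a + b + 2*k).factorial :=
    Nat.factorial_dvd_factorial (by omega)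
  exact dvd_trans (dvd_trans (mul_dvd_mul_right h1 k.factorial) h2) h3

lemma gg_mul (k a b : ℕ) : gg k a b * (b.factorial * a.factorial * k.factorial) = (a + b + 2*k).factorial :=
  Nat.div_mul_cancel (gg_dvd k a b)

lemma gg_cast (k a b : ℕ) : (gg k a b : ℚ) = (a + b + 2*k).factorial / (b.factorial * a.factorial * k.factorial) := by
  have h := gg_mul k a b
  have hpos : ((b.factorial * a.factorial * k.factorial : ℕ) : ℚ) ≠ 0 := by
    positivity
  field_simp
  exact_mod_cast (by rw [← h]; ring : gg k a b * b.factorial * a.factorial * k.factorial = (a + b + 2*k).factorial)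

lemma gg_symm (k a b : ℕ) : gg k a b = gg k b a := by
  unfold gg
  rw [show a+b+2*k = b+a+2*k by ring, show b.factorial*a.factorial*k.factorial = a.factorial*b.factorial*k.factorial by ring]

lemma fac_neq (n : ℕ) : ((n.factorial : ℕ) : ℚ) ≠ 0 := by positivity

lemma I3 (p : ℕ) : gg (p+1) 0 0 = 2*(2*p+1) * gg p 0 0 := by
  have := gg_cast (p+1) 0 0
  have := gg_cast p 0 0
  rw [← @Nat.cast_inj ℚ]
  push_cast [gg_cast]
  rw [show 0+0+2*(p+1) = (0+0+2*p)+1+1 from by ring]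
  simp [Nat.factorial_succ]
  field_simp
  ring

lemma I0 (a b : ℕ) : gg 0 (a+1) (b+1) = gg 0 a (b+1) + gg 0 (a+1) b := by
  rw [← @Nat.cast_inj ℚ]
  push_cast [gg_cast]
  rw [show (a+1)+(b+1)+2*0 = (a+b+2*0)+1+1 from by ring,
      show a+(b+1)+2*0 = (a+b+2*0)+1 from by ring,
      show (a+1)+b+2*0 = (a+b+2*0)+1 from by ring]
  simp only [Nat.factorial_succ]
  push_cast
  field_simp
  ring

lemma I1 (j a b : ℕ) : gg (j+1) (a+1) (b+1)
    = gg (j+1) a (b+1) + gg (j+1) (a+1) b + 2*(a+b+2*j+3) * gg j (a+1) (b+1) := by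
  rw [← @Nat.cast_inj ℚ]
  push_cast [gg_cast]
  rw [show (a+1)+(b+1)+2*(j+1) = (a+b+2*j+2)+1+1 from by ring,
      show a+(b+1)+2*(j+1) = (a+b+2*j+2)+1 from by ring,
      show (a+1)+b+2*(j+1) = (a+b+2*j+2)+1 from by ring,
      show (a+1)+(b+1)+2*j = a+b+2*j+2 from by ring]
  simp only [Nat.factorial_succ]
  push_cast
  field_simp
  ring

lemma I2 (p c : ℕ) : gg (p+1) 0 (c+1) = gg (p+1) 0 c + 2*(2*p+c+2) * gg p 0 (c+1) := by
  rw [← @Nat.cast_inj ℚ]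
  push_cast [gg_cast]
  rw [show 0+(c+1)+2*(p+1) = (0+c+2*(p+1))+1 from by ring,
      show 0+c+2*(p+1) = (0+(c+1)+2*p)+1 from by ring]
  simp only [Nat.factorial_succ]
  push_cast
  field_simp
  ring

def gam (p q k : ℕ) : ℕ := if k ≤ p ∧ k ≤ q then gg k (p-k) (q-k) else 0

def dterm (p q : ℕ) : ℕ → ℕ
  | 0 => 0
  | k+1 => gam p q k

lemma gam_term (p q k : ℕ) :
    gam (p+1) (q+1) k = gam p (q+1) k + gam (p+1) q k + 2*(p+q+1) * dterm p q k := by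
  cases k with
  | zero =>
      simp only [gam, dterm, Nat.zero_le, and_self, if_true, Nat.sub_zero, mul_zero, add_zero]
      exact I0 p q
  | succ j =>
      simp only [dterm]
      rcases le_or_gt (j+1) p with hp | hp
      · rcases le_or_gt (j+1) q with hq | hq
        · -- interior
          obtain ⟨a, rfl⟩ : ∃ a, p = j + 1 + a := ⟨p - (j+1), by omega⟩
          obtain ⟨b, rfl⟩ : ∃ b, q = j + 1 + b := ⟨q - (j+1), by omega⟩
          simp only [gam, if_pos (show j+1 ≤ j+1+a+1 ∧ j+1 ≤ j+1+b+1 by omega),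
            if_pos (show j+1 ≤ j+1+a ∧ j+1 ≤ j+1+b+1 by omega),
            if_pos (show j+1 ≤ j+1+a+1 ∧ j+1 ≤ j+1+b by omega),
            if_pos (show j ≤ j+1+a ∧ j ≤ j+1+b by omega)]
          rw [show j+1+a+1-(j+1) = a+1 by omega, show j+1+b+1-(j+1) = b+1 by omega,
              show j+1+a-(j+1) = a by omega, show j+1+b-(j+1) = b by omega,
              show j+1+a-j = a+1 by omega, show j+1+b-j = b+1 by omega,
              show (j+1+a)+(j+1+b)+1 = a+b+2*j+3 by ring]
          exact I1 j a b
        · -- q < j+1, with j+1 ≤ p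
          rcases Nat.lt_or_ge q j with hq2 | hq2
          · -- j > q : everything zero
            simp only [gam, if_neg (show ¬(j+1 ≤ p+1 ∧ j+1 ≤ q+1) by omega),
              if_neg (show ¬(j+1 ≤ p ∧ j+1 ≤ q+1) by omega),
              if_neg (show ¬(j+1 ≤ p+1 ∧ j+1 ≤ q) by omega),
              if_neg (show ¬(j ≤ p ∧ j ≤ q) by omega)]
            ring
          · -- j = q, q+1 ≤ p : symmetric I2
            have hjq : j = q := by omega
            subst hjq
            obtain ⟨c, rfl⟩ : ∃ c, p = j + 1 + c := ⟨p - (j+1), by omega⟩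
            simp only [gam, if_pos (show j+1 ≤ j+1+c+1 ∧ j+1 ≤ j+1 by omega),
              if_pos (show j+1 ≤ j+1+c ∧ j+1 ≤ j+1 by omega),
              if_neg (show ¬(j+1 ≤ j+1+c+1 ∧ j+1 ≤ j) by omega),
              if_pos (show j ≤ j+1+c ∧ j ≤ j by omega)]
            rw [show j+1+c+1-(j+1) = c+1 by omega, show j+1-(j+1) = 0 by omega,
                show j+1+c-(j+1) = c by omega, show j+1+c-j = c+1 by omega,
                show j - j = 0 by omega]
            rw [gg_symm (j+1) (c+1) 0, gg_symm (j+1) c 0, gg_symm j (c+1) 0]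
            rw [show (j+1+c)+j+1 = 2*j+c+2 by ring]
            have := I2 j c
            omega
      · -- j+1 > p
        rcases Nat.lt_or_ge p j with hp2 | hp2
        · -- j > p : everything zero
          simp only [gam, if_neg (show ¬(j+1 ≤ p+1 ∧ j+1 ≤ q+1) by omega),
            if_neg (show ¬(j+1 ≤ p ∧ j+1 ≤ q+1) by omega),
            if_neg (show ¬(j+1 ≤ p+1 ∧ j+1 ≤ q) by omega),
            if_neg (show ¬(j ≤ p ∧ j ≤ q) by omega)]
          ring
        · -- j = p
          have hjp : j = p := by omega
          subst hjp
          rcases le_or_gt (j+1) q with hq | hq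
          · -- j+1 ≤ q : I2
            obtain ⟨c, rfl⟩ : ∃ c, q = j + 1 + c := ⟨q - (j+1), by omega⟩
            simp only [gam, if_pos (show j+1 ≤ j+1 ∧ j+1 ≤ j+1+c+1 by omega),
              if_neg (show ¬(j+1 ≤ j ∧ j+1 ≤ j+1+c+1) by omega),
              if_pos (show j+1 ≤ j+1 ∧ j+1 ≤ j+1+c by omega),
              if_pos (show j ≤ j ∧ j ≤ j+1+c by omega)]
            rw [show j+1-(j+1) = 0 by omega, show j+1+c+1-(j+1) = c+1 by omega,
                show j+1+c-(j+1) = c by omega, show j-j = 0 by omega,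
                show j+1+c-j = c+1 by omega]
            rw [show j+(j+1+c)+1 = 2*j+c+2 by ring]
            have := I2 j c
            omega
          · rcases Nat.lt_or_ge q j with hq2 | hq2
            · -- q < j : everything zero
              simp only [gam, if_neg (show ¬(j+1 ≤ j+1 ∧ j+1 ≤ q+1) by omega),
                if_neg (show ¬(j+1 ≤ j ∧ j+1 ≤ q+1) by omega),
                if_neg (show ¬(j+1 ≤ j+1 ∧ j+1 ≤ q) by omega),
                if_neg (show ¬(j ≤ j ∧ j ≤ q) by omega)]
              ring
            · -- q = j = p : I3
              have hjq : j = q := by omega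
              subst hjq
              simp only [gam, if_pos (show j+1 ≤ j+1 ∧ j+1 ≤ j+1 by omega),
                if_neg (show ¬(j+1 ≤ j ∧ j+1 ≤ j+1) by omega),
                if_neg (show ¬(j+1 ≤ j+1 ∧ j+1 ≤ j) by omega),
                if_pos (show j ≤ j ∧ j ≤ j by omega)]
              rw [show j+1-(j+1) = 0 by omega, show j-j = 0 by omega,
                  show j+j+1 = 2*j+1 by ring]
              have := I3 j
              omega

def SS (p q : ℕ) : ℕ := ∑ k ∈ Finset.range (min p q + 1), gam p q k

lemma gam_zero {p q k : ℕ} (h : ¬(k ≤ p ∧ k ≤ q)) : gam p q k = 0 := by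
  simp [gam, if_neg h]

lemma SS_eq (p q n : ℕ) (h : min p q + 1 ≤ n) :
    ∑ k ∈ Finset.range n, gam p q k = SS p q := by
  unfold SS
  refine (Finset.sum_subset (Finset.range_subset_range.2 h) ?_).symm
  intro k _ hk
  exact gam_zero (by simp at hk ⊢; omega)

lemma SS_rec (p q : ℕ) :
    SS (p+1) (q+1) = SS p (q+1) + SS (p+1) q + 2*(p+q+1) * SS p q := by
  rw [← SS_eq (p+1) (q+1) (p+q+3) (by omega), ← SS_eq p (q+1) (p+q+3) (by omega),
      ← SS_eq (p+1) q (p+q+3) (by omega), ← SS_eq p q (p+q+2) (by omega)]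
  rw [Finset.sum_congr rfl (fun k _ => gam_term p q k)]
  rw [Finset.sum_add_distrib, Finset.sum_add_distrib, ← Finset.mul_sum]
  congr 1
  rw [show p+q+3 = (p+q+2)+1 from rfl, Finset.sum_range_succ']
  simp [dterm]

lemma SS_left (p : ℕ) : SS p 0 = 1 := by
  unfold SS
  simp only [Nat.min_zero, Finset.sum_range_one]
  simp [gam, gg, Nat.div_self (Nat.factorial_pos p)]

lemma SS_right (q : ℕ) : SS 0 q = 1 := by
  unfold SS
  simp only [Nat.zero_min, Finset.sum_range_one]
  simp [gam, gg, Nat.div_self (Nat.factorial_pos q)]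

def paths : ℕ → ℕ → Finset (List DStep)
  | 0, 0 => {[]}
  | p+1, 0 => (paths p 0).image (· ++ [DStep.E])
  | 0, q+1 => (paths 0 q).image (· ++ [DStep.N])
  | p+1, q+1 => ((paths p (q+1)).image (· ++ [DStep.E]) ∪ (paths (p+1) q).image (· ++ [DStep.N]))
      ∪ (paths p q).image (· ++ [DStep.D])

lemma sum_concat (L : List DStep) (s : DStep) :
    ((L ++ [s]).map DStep.vec).sum = (L.map DStep.vec).sum + s.vec := by
  simp

lemma vec_E : DStep.E.vec = (1,0) := rfl
lemma vec_N : DStep.N.vec = (0,1) := rfl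
lemma vec_D : DStep.D.vec = (1,1) := rfl

lemma mem_paths : ∀ p q (L : List DStep), L ∈ paths p q ↔ (L.map DStep.vec).sum = (p, q) := by
  intro p q
  induction p, q using paths.induct with
  | case1 =>
      intro L
      rw [paths]
      constructor
      · intro h; simp at h; subst h; simp; rfl
      · intro h
        rcases List.eq_nil_or_concat L with rfl | ⟨L', s, rfl⟩
        · simp
        · rw [List.concat_eq_append] at h ⊢
          rw [sum_concat, Prod.ext_iff, Prod.fst_add, Prod.snd_add] at h
          rcases s <;> simp [DStep.vec] at h
  | case2 p ih =>
      intro L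
      rw [paths]
      simp only [Finset.mem_image]
      constructor
      · rintro ⟨L', hL', rfl⟩
        rw [sum_concat, (ih L').1 hL']
        rfl
      · intro h
        rcases List.eq_nil_or_concat L with rfl | ⟨L', s, rfl⟩
        · simp [Prod.ext_iff] at h
        · rw [List.concat_eq_append] at h ⊢
          rw [sum_concat, Prod.ext_iff, Prod.fst_add, Prod.snd_add] at h
          rcases s <;> simp [DStep.vec] at h
          exact ⟨L', (ih L').2 (by rw [Prod.ext_iff]; exact ⟨by omega, by omega⟩), rfl⟩
  | case3 q ih =>
      intro L
      rw [paths]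
      simp only [Finset.mem_image]
      constructor
      · rintro ⟨L', hL', rfl⟩
        rw [sum_concat, (ih L').1 hL']
        rfl
      · intro h
        rcases List.eq_nil_or_concat L with rfl | ⟨L', s, rfl⟩
        · simp [Prod.ext_iff] at h
        · rw [List.concat_eq_append] at h ⊢
          rw [sum_concat, Prod.ext_iff, Prod.fst_add, Prod.snd_add] at h
          rcases s <;> simp [DStep.vec] at h
          exact ⟨L', (ih L').2 (by rw [Prod.ext_iff]; exact ⟨by omega, by omega⟩), rfl⟩
  | case4 p q ih1 ih2 ih3 =>
      intro L
      rw [paths]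
      simp only [Finset.mem_union, Finset.mem_image]
      constructor
      · rintro ((⟨L', hL', rfl⟩ | ⟨L', hL', rfl⟩) | ⟨L', hL', rfl⟩) <;>
          rw [sum_concat]
        · rw [(ih1 L').1 hL']; rfl
        · rw [(ih2 L').1 hL']; rfl
        · rw [(ih3 L').1 hL']; rfl
      · intro h
        rcases List.eq_nil_or_concat L with rfl | ⟨L', s, rfl⟩
        · simp [Prod.ext_iff] at h
        · rw [List.concat_eq_append] at h ⊢
          rw [sum_concat, Prod.ext_iff, Prod.fst_add, Prod.snd_add] at h
          rcases s <;> simp [DStep.vec] at h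
          · exact Or.inl (Or.inl ⟨L', (ih1 L').2 (by rw [Prod.ext_iff]; exact ⟨by omega, by omega⟩), rfl⟩)
          · exact Or.inl (Or.inr ⟨L', (ih2 L').2 (by rw [Prod.ext_iff]; exact ⟨by omega, by omega⟩), rfl⟩)
          · exact Or.inr ⟨L', (ih3 L').2 (by rw [Prod.ext_iff]; exact ⟨by omega, by omega⟩), rfl⟩

lemma pathWeight_append (L₁ L₂ : List DStep) (st : ℕ × ℕ) :
    pathWeight st (L₁ ++ L₂) = pathWeight st L₁ * pathWeight (st + (L₁.map DStep.vec).sum) L₂ := by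
  induction L₁ generalizing st with
  | nil => simp [pathWeight]
  | cons s rest ih => simp [pathWeight, ih, mul_assoc, add_assoc]

def stepW (p q : ℕ) : DStep → ℕ
  | DStep.E => 1
  | DStep.N => 1
  | DStep.D => 2 * (p + q + 1)

lemma pathWeight_concat {p q : ℕ} {L : List DStep} (h : L ∈ paths p q) (s : DStep) :
    pathWeight (0, 0) (L ++ [s]) = pathWeight (0, 0) L * stepW p q s := by
  rw [pathWeight_append, (mem_paths p q L).1 h]
  congr 1
  have : ((0, 0) : ℕ × ℕ) + (p, q) = (p, q) := zero_add _
  rw [this]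
  rcases s <;> simp [pathWeight, stepW]

lemma concat_inj (s : DStep) : Function.Injective (· ++ [s] : List DStep → List DStep) := by
  intro a b h
  simpa using h

def W (p q : ℕ) : ℕ := ∑ L ∈ paths p q, pathWeight (0, 0) L

lemma sum_image_concat (s : DStep) (p q p' q' : ℕ) :
    ∑ L ∈ (paths p q).image (· ++ [s]), pathWeight (0, 0) L = W p q * stepW p' q' s
      ∨ True := Or.inr trivial

lemma W_00 : W 0 0 = 1 := by
  unfold W; rw [paths]; simp [pathWeight]

lemma W_left (p : ℕ) : W (p+1) 0 = W p 0 := by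
  unfold W; rw [paths, Finset.sum_image (fun a _ b _ h => concat_inj _ h)]
  refine Finset.sum_congr rfl fun L hL => ?_
  rw [pathWeight_concat hL]
  simp [stepW]

lemma W_right (q : ℕ) : W 0 (q+1) = W 0 q := by
  unfold W; rw [paths, Finset.sum_image (fun a _ b _ h => concat_inj _ h)]
  refine Finset.sum_congr rfl fun L hL => ?_
  rw [pathWeight_concat hL]
  simp [stepW]

lemma last_ne {s t : DStep} (h : s ≠ t) (a b : List DStep) : a ++ [s] ≠ b ++ [t] := by
  intro he
  have := congrArg List.getLast? he
  simp at this
  exact h this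

lemma W_main (p q : ℕ) :
    W (p+1) (q+1) = W p (q+1) + W (p+1) q + 2*(p+q+1) * W p q := by
  unfold W
  rw [paths]
  rw [Finset.sum_union, Finset.sum_union]
  · rw [Finset.sum_image (fun a _ b _ h => concat_inj _ h),
        Finset.sum_image (fun a _ b _ h => concat_inj _ h),
        Finset.sum_image (fun a _ b _ h => concat_inj _ h)]
    rw [Finset.sum_congr rfl (fun L hL => pathWeight_concat hL DStep.E),
        Finset.sum_congr rfl (fun L hL => pathWeight_concat hL DStep.N),
        Finset.sum_congr rfl (fun L hL => pathWeight_concat hL DStep.D)]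
    simp only [stepW, mul_one, ← Finset.sum_mul]
    ring
  · refine Finset.disjoint_left.2 fun a ha hb => ?_
    simp only [Finset.mem_image] at ha hb
    obtain ⟨x, _, hx⟩ := ha
    obtain ⟨y, _, hy⟩ := hb
    exact last_ne (by simp) x y (hx.trans hy.symm)
  · refine Finset.disjoint_left.2 fun a ha hb => ?_
    simp only [Finset.mem_union, Finset.mem_image] at ha hb
    obtain ⟨y, _, hy⟩ := hb
    rcases ha with ⟨x, _, hx⟩ | ⟨x, _, hx⟩
    · exact last_ne (by simp) x y (hx.trans hy.symm)
    · exact last_ne (by simp) x y (hx.trans hy.symm)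

lemma W_eq_SS (p q : ℕ) : W p q = SS p q := by
  induction p, q using paths.induct with
  | case1 => rw [W_00, SS_left 0]
  | case2 p ih => rw [W_left, ih, SS_left, SS_left]
  | case3 q ih => rw [W_right, ih, SS_right, SS_right]
  | case4 p q ih1 ih2 ih3 => rw [W_main, SS_rec, ih1, ih2, ih3]

theorem sum_weights_delannoy_paths (p q : ℕ) :
    ∑ᶠ L ∈ {L : List DStep | (L.map DStep.vec).sum = (p, q)}, pathWeight (0, 0) L
      = ∑ k ∈ Finset.range (min p q + 1),
          Nat.factorial (p + q)
            / (Nat.factorial (q - k) * Nat.factorial (p - k) * Nat.factorial k) := by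
  have hset : {L : List DStep | (L.map DStep.vec).sum = (p, q)} = ↑(paths p q) :=
    Set.ext fun L => by simp [mem_paths p q L]
  rw [hset, finsum_mem_coe_finset]
  have hW : W p q = SS p q := W_eq_SS p q
  unfold W SS at hW
  rw [hW]
  refine Finset.sum_congr rfl fun k hk => ?_
  rw [Finset.mem_range] at hk
  rw [gam, if_pos (show k ≤ p ∧ k ≤ q by omega)]
  unfold gg
  rw [show (p-k)+(q-k)+2*k = p+q from by omega]
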